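/- Let v : Fin N → ℝ be a family of voter ideal points on the real line and let I be a subset of Fin N. Then I is EDP-allowed if and only if there exists a point t ∈ ℝ such that either (v i < t for all i ∈ I and v j > t for all j ∉ I) or (v i > t for all i ∈ I and v j < t for all j ∉ I). -/
import Mathlib


/-- A coalition `I` is **EDP-allowed** (one dimension): there exist outcome points
`p, q ∈ ℝ` such that every voter in `I` is strictly closer to `p` and every voter
outside `I` is strictly closer to `q`. -/
def EDPAllowed1D {N : ℕ} (v : Fin N → ℝ) (I : Set (Fin N)) : Prop :=
  ∃ p q : ℝ, (∀ i ∈ I, |v i - p| < |v i - q|) ∧ (∀ j ∉ I, |v j - q| < |v j - p|)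

lemma abs_sub_lt_iff_sq (x p q : ℝ) : |x - p| < |x - q| ↔ (x - p)^2 < (x - q)^2 := by
  rw [← sq_abs (x - p), ← sq_abs (x - q)]
  constructor
  · intro h; nlinarith [abs_nonneg (x - p), abs_nonneg (x - q)]
  · intro h; nlinarith [abs_nonneg (x - p), abs_nonneg (x - q)]

/-- A coalition is EDP-allowed on the real line iff it is separated from its complement
by a point `t`. -/
theorem edp_allowed_iff_separated (N : ℕ) (v : Fin N → ℝ) (I : Set (Fin N)) :
    EDPAllowed1D v I ↔
      ∃ t : ℝ, ((∀ i ∈ I, v i < t) ∧ (∀ j ∉ I, v j > t)) ∨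
        ((∀ i ∈ I, v i > t) ∧ (∀ j ∉ I, v j < t)) := by
  constructor
  · rintro ⟨p, q, h1, h2⟩
    rcases lt_trichotomy p q with hpq | hpq | hpq
    · refine ⟨(p + q) / 2, Or.inl ⟨fun i hi => ?_, fun j hj => ?_⟩⟩
      · have := (abs_sub_lt_iff_sq (v i) p q).1 (h1 i hi); nlinarith
      · have := (abs_sub_lt_iff_sq (v j) q p).1 (h2 j hj); nlinarith
    · refine ⟨0, Or.inl ⟨fun i hi => ?_, fun j hj => ?_⟩⟩
      · exact absurd (h1 i hi) (by simp [hpq])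
      · exact absurd (h2 j hj) (by simp [hpq])
    · refine ⟨(p + q) / 2, Or.inr ⟨fun i hi => ?_, fun j hj => ?_⟩⟩
      · have := (abs_sub_lt_iff_sq (v i) p q).1 (h1 i hi); nlinarith
      · have := (abs_sub_lt_iff_sq (v j) q p).1 (h2 j hj); nlinarith
  · rintro ⟨t, ⟨h1, h2⟩ | ⟨h1, h2⟩⟩
    · refine ⟨t - 1, t + 1, fun i hi => ?_, fun j hj => ?_⟩
      · rw [abs_sub_lt_iff_sq]; have := h1 i hi; nlinarith
      · rw [abs_sub_lt_iff_sq]; have := h2 j hj; nlinarith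
    · refine ⟨t + 1, t - 1, fun i hi => ?_, fun j hj => ?_⟩
      · rw [abs_sub_lt_iff_sq]; have := h1 i hi; nlinarith
      · rw [abs_sub_lt_iff_sq]; have := h2 j hj; nlinarith
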